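/- The number of parking functions of length n equals (n+1)^(n-1). -/

import Mathlib

open Finset

/-- `a` is a parking function of length `n`: its weakly increasing rearrangement
`b i = a (σ i)` satisfies `b i ≤ i` (with `1`-indexed bound `i`, i.e. `i.val + 1`). -/
def IsParkingFunction (n : ℕ) (a : Fin n → ℕ) : Prop :=
  ∃ σ : Equiv.Perm (Fin n), Monotone (a ∘ σ) ∧ ∀ i : Fin n, a (σ i) ≤ i.val + 1


lemma card_filter_val_lt (n k : ℕ) (hk : k ≤ n) :
    (univ.filter (fun i : Fin n => (i : ℕ) < k)).card = k := by
  have h : (univ.filter (fun i : Fin n => (i : ℕ) < k)).card = (Finset.range k).card := by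
    refine Finset.card_bij (fun i _ => (i : ℕ)) ?_ ?_ ?_
    · intro i hi; simp at hi ⊢; omega
    · intro i hi j hj h; exact Fin.ext h
    · intro j hj
      simp at hj
      exact ⟨⟨j, lt_of_lt_of_le hj hk⟩, by simp [hj], rfl⟩
  simpa using h

lemma parking_iff (n : ℕ) (a : Fin n → ℕ) :
    IsParkingFunction n a ↔
      ∀ k, 1 ≤ k → k ≤ n → k ≤ (univ.filter (fun i : Fin n => a i ≤ k)).card := by
  constructor
  · rintro ⟨σ, hm, hb⟩ k hk1 hkn
    have hsub : (univ.filter (fun i : Fin n => (i : ℕ) < k)).image σ ⊆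
        univ.filter (fun i : Fin n => a i ≤ k) := by
      intro j hj
      simp only [Finset.mem_image, Finset.mem_filter, Finset.mem_univ, true_and] at hj ⊢
      obtain ⟨i, hi, rfl⟩ := hj
      exact le_trans (hb i) (by omega)
    calc k = (univ.filter (fun i : Fin n => (i : ℕ) < k)).card := (card_filter_val_lt n k hkn).symm
    _ = ((univ.filter (fun i : Fin n => (i : ℕ) < k)).image σ).card :=
        (Finset.card_image_of_injective _ σ.injective).symm
    _ ≤ _ := Finset.card_le_card hsub
  · intro h
    refine ⟨Tuple.sort a, Tuple.monotone_sort a, ?_⟩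
    intro i
    by_contra hcon
    push_neg at hcon
    set σ := Tuple.sort a with hσ
    set k := (i : ℕ) + 1 with hk
    have hsub : univ.filter (fun j : Fin n => a j ≤ k) ⊆
        (univ.filter (fun j : Fin n => (j : ℕ) < (i : ℕ))).image σ := by
      intro j hj
      simp only [Finset.mem_filter, Finset.mem_univ, true_and] at hj
      simp only [Finset.mem_image, Finset.mem_filter, Finset.mem_univ, true_and]
      refine ⟨σ⁻¹ j, ?_, by simp⟩
      by_contra hl
      push_neg at hl
      have : a (σ i) ≤ a (σ (σ⁻¹ j)) := Tuple.monotone_sort a (by exact_mod_cast hl)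
      simp only [Equiv.Perm.inv_def, Equiv.apply_symm_apply] at this
      omega
    have h1 : k ≤ (univ.filter (fun j : Fin n => a j ≤ k)).card :=
      h k (by omega) i.isLt
    have h2 : (univ.filter (fun j : Fin n => a j ≤ k)).card ≤ (i : ℕ) := by
      calc _ ≤ ((univ.filter (fun j : Fin n => (j : ℕ) < (i : ℕ))).image σ).card :=
          Finset.card_le_card hsub
      _ = (univ.filter (fun j : Fin n => (j : ℕ) < (i : ℕ))).card :=
          Finset.card_image_of_injective _ σ.injective
      _ ≤ (i : ℕ) := by
          rw [card_filter_val_lt n _ (le_of_lt i.isLt)]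
    omega

lemma card_Ico_filter_cast (m : ℕ) (hm : 0 < m) (t len : ℕ) (hlen : len ≤ m) (z : ZMod m) :
    ((Finset.Ico t (t + len)).filter (fun j : ℕ => ((j : ZMod m) = z))).card
      = if (z - (t : ZMod m)).val < len then 1 else 0 := by
  have : NeZero m := ⟨hm.ne'⟩
  have key : ∀ j, t ≤ j → j < t + len → ((j : ZMod m) = z) → j = t + (z - (t : ZMod m)).val := by
    intro j h1 h2 h3
    have hsub : ((j - t : ℕ) : ZMod m) = z - (t : ZMod m) := by
      rw [Nat.cast_sub h1, h3]
    have hlt : j - t < m := by omega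
    have := ZMod.val_cast_of_lt hlt
    rw [hsub] at this
    omega
  split_ifs with h
  · rw [Finset.card_eq_one]
    refine ⟨t + (z - (t : ZMod m)).val, ?_⟩
    rw [Finset.eq_singleton_iff_unique_mem]
    constructor
    · simp only [Finset.mem_filter, Finset.mem_Ico]
      refine ⟨⟨by omega, by omega⟩, ?_⟩
      push_cast
      rw [ZMod.natCast_val, ZMod.cast_id]
      ring
    · intro j hj
      simp only [Finset.mem_filter, Finset.mem_Ico] at hj
      exact key j hj.1.1 hj.1.2 hj.2
  · rw [Finset.card_eq_zero, Finset.filter_eq_empty_iff]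
    intro j hj
    simp only [Finset.mem_Ico] at hj
    intro h3
    have := key j hj.1 hj.2 h3
    have hv := ZMod.val_lt (z - (t : ZMod m))
    omega

/-- Number of `i` whose value `b i` falls in the residues of `[0, t)`. -/
def pfS (n : ℕ) (b : Fin n → ZMod (n + 1)) (t : ℕ) : ℕ :=
  ∑ i : Fin n, ((Finset.Ico 0 t).filter (fun j : ℕ => ((j : ZMod (n + 1)) = b i))).card

lemma pfS_split (n : ℕ) (b : Fin n → ZMod (n + 1)) (t len : ℕ) :
    pfS n b (t + len) = pfS n b t
      + ∑ i : Fin n, ((Finset.Ico t (t + len)).filter (fun j : ℕ => ((j : ZMod (n + 1)) = b i))).card := by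
  unfold pfS
  rw [← Finset.sum_add_distrib]
  refine Finset.sum_congr rfl fun i _ => ?_
  rw [← Finset.card_union_of_disjoint, ← Finset.filter_union,
    Finset.Ico_union_Ico_eq_Ico (Nat.zero_le t) (Nat.le_add_right t len)]
  exact Finset.disjoint_filter_filter (Finset.Ico_disjoint_Ico_consecutive 0 t (t + len))

lemma pfS_period (n : ℕ) (b : Fin n → ZMod (n + 1)) (t : ℕ) :
    pfS n b (t + (n + 1)) = pfS n b t + n := by
  rw [pfS_split]
  congr 1
  have : ∀ i : Fin n,
      ((Finset.Ico t (t + (n + 1))).filter (fun j : ℕ => ((j : ZMod (n + 1)) = b i))).card = 1 := by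
    intro i
    rw [card_Ico_filter_cast (n + 1) (Nat.succ_pos n) t (n + 1) le_rfl (b i)]
    simp [ZMod.val_lt, Nat.lt_succ_iff.mp (ZMod.val_lt (b i - (t : ZMod (n + 1))))]
  simp [this]

lemma val_sub_one_lt_iff (n k : ℕ) (hk : k ≤ n) (w : ZMod (n + 1)) :
    (w - 1).val < k ↔ 1 ≤ w.val ∧ w.val ≤ k := by
  rcases Nat.eq_zero_or_pos w.val with h0 | hpos
  · have hw : w = 0 := (ZMod.val_eq_zero _).mp h0
    have hneg : (w - 1).val = n := by
      rw [hw, zero_sub]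
      have : ((-1 : ZMod (n + 1))).val = n := by
        rw [ZMod.val_neg_one]
      exact this
    omega
  · have hw : w = ((w.val : ℕ) : ZMod (n + 1)) := by
      rw [ZMod.natCast_val, ZMod.cast_id]
    have hlt : w.val < n + 1 := ZMod.val_lt w
    have hsub : w - 1 = ((w.val - 1 : ℕ) : ZMod (n + 1)) := by
      rw [Nat.cast_sub hpos, ← hw]; norm_num
    rw [hsub, ZMod.val_cast_of_lt (by omega)]
    omega

lemma pfS_window (n : ℕ) (b : Fin n → ZMod (n + 1)) (c : ZMod (n + 1)) (k : ℕ) (hk : k ≤ n) :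
    pfS n b (c.val + 1 + k) = pfS n b (c.val + 1)
      + (univ.filter (fun i : Fin n => 1 ≤ (b i - c).val ∧ (b i - c).val ≤ k)).card := by
  rw [pfS_split]
  congr 1
  have hcast : (((c.val + 1 : ℕ)) : ZMod (n + 1)) = c + 1 := by
    push_cast [ZMod.natCast_val, ZMod.cast_id]
    ring
  have hpt : ∀ i : Fin n,
      ((Finset.Ico (c.val + 1) (c.val + 1 + k)).filter
        (fun j : ℕ => ((j : ZMod (n + 1)) = b i))).card
      = if 1 ≤ (b i - c).val ∧ (b i - c).val ≤ k then 1 else 0 := by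
    intro i
    rw [card_Ico_filter_cast (n + 1) (Nat.succ_pos n) _ k (by omega) (b i), hcast]
    have h2 : b i - (c + 1) = (b i - c) - 1 := by ring
    rw [h2]
    simp only [val_sub_one_lt_iff n k hk (b i - c)]
  rw [Finset.sum_congr rfl (fun i _ => hpt i), Finset.card_filter]

def IsGoodShift (n : ℕ) (b : Fin n → ZMod (n + 1)) (c : ZMod (n + 1)) : Prop :=
  ∀ k, 1 ≤ k → k ≤ n →
    k ≤ (univ.filter (fun i : Fin n => 1 ≤ (b i - c).val ∧ (b i - c).val ≤ k)).card

lemma isGoodShift_iff (n : ℕ) (b : Fin n → ZMod (n + 1)) (c : ZMod (n + 1)) :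
    IsGoodShift n b c ↔ ∀ k, 1 ≤ k → k ≤ n →
      pfS n b (c.val + 1) + k ≤ pfS n b (c.val + 1 + k) := by
  unfold IsGoodShift
  constructor <;> intro h k h1 h2 <;> have h3 := h k h1 h2 <;>
    have hw := pfS_window n b c k h2 <;> omega

lemma exists_goodShift (n : ℕ) (hn : 0 < n) (b : Fin n → ZMod (n + 1)) :
    ∃ c, IsGoodShift n b c := by
  set G : ℕ → ℤ := fun t => (pfS n b t : ℤ) - t with hG
  have hper : ∀ t, G (t + (n + 1)) = G t - 1 := by
    intro t
    simp only [hG, pfS_period]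
    push_cast
    ring
  set T := Finset.Icc 1 (n + 1) with hT
  have hTne : T.Nonempty := ⟨1, by simp [hT]⟩
  set A := T.filter (fun t => ∀ u ∈ T, G t ≤ G u) with hA
  have hAne : A.Nonempty := by
    obtain ⟨t0, ht0, hmin⟩ := Finset.exists_min_image T G hTne
    exact ⟨t0, Finset.mem_filter.mpr ⟨ht0, hmin⟩⟩
  set ts := A.min' hAne with hts
  have htsA : ts ∈ A := Finset.min'_mem _ _
  rw [hA, Finset.mem_filter, hT, Finset.mem_Icc] at htsA
  obtain ⟨⟨hts1, htsm⟩, hmin⟩ := htsA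
  have hstrict : ∀ p, 1 ≤ p → p < ts → G ts < G p := by
    intro p h1 h2
    have hpT : p ∈ T := by rw [hT, Finset.mem_Icc]; omega
    by_contra hcon
    push_neg at hcon
    have hpA : p ∈ A := by
      rw [hA, Finset.mem_filter]
      exact ⟨hpT, fun u hu => le_trans hcon (hmin u (by rwa [hT] at hu))⟩
    have := Finset.min'_le A p hpA
    omega
  refine ⟨((ts - 1 : ℕ) : ZMod (n + 1)), ?_⟩
  have hcval : (((ts - 1 : ℕ) : ZMod (n + 1))).val = ts - 1 := ZMod.val_cast_of_lt (by omega)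
  rw [isGoodShift_iff, hcval]
  have hts_eq : ts - 1 + 1 = ts := by omega
  rw [hts_eq]
  intro k h1 h2
  rcases le_or_gt (ts + k) (n + 1) with hle | hgt
  · have : G ts ≤ G (ts + k) := hmin (ts + k) (Finset.mem_Icc.mpr (by omega))
    simp only [hG] at this
    omega
  · set p := ts + k - (n + 1) with hp
    have hps : G ts < G p := hstrict p (by omega) (by omega)
    have heq : ts + k = p + (n + 1) := by omega
    have := hper p
    rw [← heq] at this
    simp only [hG] at hps this
    omega

lemma goodShift_unique (n : ℕ) (hn : 0 < n) (b : Fin n → ZMod (n + 1))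
    (c c' : ZMod (n + 1)) (h : IsGoodShift n b c) (h' : IsGoodShift n b c') : c = c' := by
  have key : ∀ d d' : ZMod (n + 1), IsGoodShift n b d → IsGoodShift n b d' →
      d.val < d'.val → False := by
    intro d d' hd hd' hlt
    rw [isGoodShift_iff] at hd hd'
    have hvd : d.val < n + 1 := ZMod.val_lt d
    have hvd' : d'.val < n + 1 := ZMod.val_lt d'
    set t := d.val + 1 with ht
    set t' := d'.val + 1 with ht'
    have h1 := hd (t' - t) (by omega) (by omega)
    rw [show t + (t' - t) = t' by omega] at h1
    have h2 := hd' (n + 1 - (t' - t)) (by omega) (by omega)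
    rw [show t' + (n + 1 - (t' - t)) = t + (n + 1) by omega, pfS_period] at h2
    omega
  rcases lt_trichotomy c.val c'.val with hlt | heq | hgt
  · exact absurd (key c c' h h' hlt) id
  · have : ((c.val : ℕ) : ZMod (n + 1)) = ((c'.val : ℕ) : ZMod (n + 1)) := by rw [heq]
    rwa [ZMod.natCast_val, ZMod.cast_id, ZMod.natCast_val, ZMod.cast_id] at this
  · exact absurd (key c' c h' h hgt) id

lemma parking_le (n : ℕ) (hn : 0 < n) (a : Fin n → ℕ) (h : IsParkingFunction n a) (i : Fin n) :
    a i ≤ n := by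
  rw [parking_iff] at h
  have h1 := h n hn le_rfl
  have h2 : (univ.filter (fun i : Fin n => a i ≤ n)).card ≤ n := by
    simpa using Finset.card_le_univ (univ.filter (fun i : Fin n => a i ≤ n))
  have h3 : (univ.filter (fun i : Fin n => a i ≤ n)) = univ := by
    apply Finset.eq_univ_of_card
    simp only [Fintype.card_fin]
    omega
  have := Finset.mem_filter.mp (h3 ▸ Finset.mem_univ i)
  exact this.2

lemma goodShift_of_parking (n : ℕ) (hn : 0 < n) (a : Fin n → ℕ)
    (hpos : ∀ i, 1 ≤ a i) (hpk : IsParkingFunction n a) (c : ZMod (n + 1)) :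
    IsGoodShift n (fun i => (a i : ZMod (n + 1)) + c) c := by
  have hle := parking_le n hn a hpk
  have hval : ∀ i : Fin n, ((a i : ZMod (n + 1)) + c - c).val = a i := by
    intro i
    have h : (a i : ZMod (n + 1)) + c - c = (a i : ZMod (n + 1)) := by ring
    rw [h, ZMod.val_cast_of_lt (by have := hle i; omega)]
  rw [parking_iff] at hpk
  intro k h1 h2
  refine le_trans (hpk k h1 h2) (Finset.card_le_card ?_)
  intro i hi
  simp only [Finset.mem_filter, Finset.mem_univ, true_and] at hi ⊢
  rw [hval i]
  exact ⟨hpos i, hi⟩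

/-- The number of parking functions of length `n` is `(n+1)^(n-1)`. -/
theorem stmt1 (n : ℕ) (hn : 0 < n) :
    {a : Fin n → ℕ | (∀ i, 1 ≤ a i) ∧ IsParkingFunction n a}.ncard = (n + 1) ^ (n - 1) := by
  classical
  set S := {a : Fin n → ℕ | (∀ i, 1 ≤ a i) ∧ IsParkingFunction n a} with hS
  set Ψ : S × ZMod (n + 1) → (Fin n → ZMod (n + 1)) :=
    fun p => fun i => ((p.1.1 i : ℕ) : ZMod (n + 1)) + p.2 with hΨ
  have hbij : Function.Bijective Ψ := by
    constructor
    · rintro ⟨⟨a, ha⟩, c⟩ ⟨⟨a', ha'⟩, c'⟩ hfe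
      have hb : ∀ i, (a i : ZMod (n + 1)) + c = (a' i : ZMod (n + 1)) + c' :=
        fun i => congrFun hfe i
      have hg : IsGoodShift n (fun i => (a i : ZMod (n + 1)) + c) c :=
        goodShift_of_parking n hn a ha.1 ha.2 c
      have hg' : IsGoodShift n (fun i => (a i : ZMod (n + 1)) + c) c' := by
        have heq : (fun i => (a i : ZMod (n + 1)) + c)
            = fun i => (a' i : ZMod (n + 1)) + c' := funext hb
        rw [heq]
        exact goodShift_of_parking n hn a' ha'.1 ha'.2 c'
      have hcc : c = c' := goodShift_unique n hn _ c c' hg hg'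
      subst hcc
      have ha_eq : a = a' := by
        funext i
        have h1 : ((a i : ℕ) : ZMod (n + 1)) = ((a' i : ℕ) : ZMod (n + 1)) := by
          have := hb i
          exact add_right_cancel this
        have h2 := congrArg ZMod.val h1
        rwa [ZMod.val_cast_of_lt (by have := parking_le n hn a ha.2 i; omega),
          ZMod.val_cast_of_lt (by have := parking_le n hn a' ha'.2 i; omega)] at h2
      simp only [Prod.mk.injEq, Subtype.mk.injEq]
      exact ⟨ha_eq, trivial⟩
    · intro b
      obtain ⟨c, hc⟩ := exists_goodShift n hn b
      set a : Fin n → ℕ := fun i => (b i - c).val with haa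
      have hface : (univ.filter (fun i : Fin n => 1 ≤ (b i - c).val ∧ (b i - c).val ≤ n))
          = univ := by
        apply Finset.eq_univ_of_card
        have h1 := hc n hn le_rfl
        have h2 : (univ.filter
            (fun i : Fin n => 1 ≤ (b i - c).val ∧ (b i - c).val ≤ n)).card ≤ n := by
          simpa using Finset.card_le_univ (univ.filter
            (fun i : Fin n => 1 ≤ (b i - c).val ∧ (b i - c).val ≤ n))
        simp only [Fintype.card_fin]
        omega
      have hpos : ∀ i : Fin n, 1 ≤ a i ∧ a i ≤ n := by
        intro i
        have hmem : i ∈ univ.filter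
            (fun i : Fin n => 1 ≤ (b i - c).val ∧ (b i - c).val ≤ n) := by
          rw [hface]; exact Finset.mem_univ i
        exact (Finset.mem_filter.mp hmem).2
      have hpk : IsParkingFunction n a := by
        rw [parking_iff]
        intro k h1 h2
        refine le_trans (hc k h1 h2) (Finset.card_le_card ?_)
        intro i hi
        simp only [Finset.mem_filter, Finset.mem_univ, true_and] at hi ⊢
        exact hi.2
      refine ⟨⟨⟨a, ⟨fun i => (hpos i).1, hpk⟩⟩, c⟩, ?_⟩
      funext i
      show ((a i : ℕ) : ZMod (n + 1)) + c = b i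
      simp only [haa]
      rw [ZMod.natCast_val, ZMod.cast_id]
      ring
  have hcard := Nat.card_eq_of_bijective Ψ hbij
  rw [Nat.card_prod] at hcard
  have h1 : Nat.card S = S.ncard := Nat.card_coe_set_eq S
  have h2 : Nat.card (ZMod (n + 1)) = n + 1 := by
    simp [Nat.card_eq_fintype_card, ZMod.card]
  have h3 : Nat.card (Fin n → ZMod (n + 1)) = (n + 1) ^ n := by
    simp [Nat.card_eq_fintype_card, ZMod.card, Fintype.card_fin]
  rw [h1, h2, h3] at hcard
  have h4 : (n + 1) ^ n = (n + 1) ^ (n - 1) * (n + 1) := by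
    rw [← pow_succ]
    congr 1
    omega
  rw [h4] at hcard
  exact Nat.eq_of_mul_eq_mul_right (Nat.succ_pos n) hcard
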